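/- arXiv:2301.03138 — 3 statements merged into one kernel-verified Lean document; each statement's English description precedes it below -/
import Mathlib

section
/- Let 𝔤 be a finite-dimensional complex Lie algebra with nondegenerate invariant symmetric bilinear form B, basis {x_a} and B-dual basis {x^a}. In the algebra U(𝔤) ⊗ U(𝔤) ⊗ U(𝔤) (tensor product of three copies of the universal enveloping algebra), set Ω^{(12)} = Σ_a x_a ⊗ x^a ⊗ 1, Ω^{(13)} = Σ_a x_a ⊗ 1 ⊗ x^a, and Ω^{(23)} = Σ_a 1 ⊗ x_a ⊗ x^a. Then Ω^{(12)} commutes with Ω^{(13)} + Ω^{(23)}: Ω^{(12)}·(Ω^{(13)} + Ω^{(23)}) = (Ω^{(13)} + Ω^{(23)})·Ω^{(12)}. -/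
open scoped TensorProduct

/-- `Ω^{(12)} = Σ_a x_a ⊗ x^a ⊗ 1` in `U(𝔤) ⊗ U(𝔤) ⊗ U(𝔤)`. -/
noncomputable def omega12 {L : Type*} [LieRing L] [LieAlgebra ℂ L]
    {ι : Type*} [Fintype ι] (x x' : ι → L) :
    UniversalEnvelopingAlgebra ℂ L ⊗[ℂ]
      (UniversalEnvelopingAlgebra ℂ L ⊗[ℂ] UniversalEnvelopingAlgebra ℂ L) :=
  ∑ a : ι, (UniversalEnvelopingAlgebra.ι ℂ (x a)) ⊗ₜ[ℂ]
    ((UniversalEnvelopingAlgebra.ι ℂ (x' a)) ⊗ₜ[ℂ] (1 : UniversalEnvelopingAlgebra ℂ L))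

/-- `Ω^{(13)} = Σ_a x_a ⊗ 1 ⊗ x^a` in `U(𝔤) ⊗ U(𝔤) ⊗ U(𝔤)`. -/
noncomputable def omega13 {L : Type*} [LieRing L] [LieAlgebra ℂ L]
    {ι : Type*} [Fintype ι] (x x' : ι → L) :
    UniversalEnvelopingAlgebra ℂ L ⊗[ℂ]
      (UniversalEnvelopingAlgebra ℂ L ⊗[ℂ] UniversalEnvelopingAlgebra ℂ L) :=
  ∑ a : ι, (UniversalEnvelopingAlgebra.ι ℂ (x a)) ⊗ₜ[ℂ]
    ((1 : UniversalEnvelopingAlgebra ℂ L) ⊗ₜ[ℂ] (UniversalEnvelopingAlgebra.ι ℂ (x' a)))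

/-- `Ω^{(23)} = Σ_a 1 ⊗ x_a ⊗ x^a` in `U(𝔤) ⊗ U(𝔤) ⊗ U(𝔤)`. -/
noncomputable def omega23 {L : Type*} [LieRing L] [LieAlgebra ℂ L]
    {ι : Type*} [Fintype ι] (x x' : ι → L) :
    UniversalEnvelopingAlgebra ℂ L ⊗[ℂ]
      (UniversalEnvelopingAlgebra ℂ L ⊗[ℂ] UniversalEnvelopingAlgebra ℂ L) :=
  ∑ a : ι, (1 : UniversalEnvelopingAlgebra ℂ L) ⊗ₜ[ℂ]
    ((UniversalEnvelopingAlgebra.ι ℂ (x a)) ⊗ₜ[ℂ] (UniversalEnvelopingAlgebra.ι ℂ (x' a)))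

attribute [local instance] LieRing.ofAssociativeRing

/-- For a finite-dimensional complex Lie algebra with nondegenerate invariant symmetric
bilinear form `B`, basis `{x_a}` and `B`-dual basis `{x^a}`, in
`U(𝔤) ⊗ U(𝔤) ⊗ U(𝔤)` the element `Ω^{(12)}` commutes with `Ω^{(13)} + Ω^{(23)}`. -/
theorem omega12_commutes_with_omega13_add_omega23
    {L : Type*} [LieRing L] [LieAlgebra ℂ L] [FiniteDimensional ℂ L]
    {ι : Type*} [Fintype ι] [DecidableEq ι] (x : Module.Basis ι ℂ L)
    (B : L →ₗ[ℂ] L →ₗ[ℂ] ℂ)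
    (hB_nondeg : ∀ u : L, (∀ v : L, B u v = 0) → u = 0)
    (hB_symm : ∀ u v : L, B u v = B v u)
    (hB_inv : ∀ u v w : L, B ⁅u, v⁆ w = B u ⁅v, w⁆)
    (x' : ι → L)
    (hdual : ∀ a b : ι, B (x a) (x' b) = if a = b then (1 : ℂ) else 0) :
    omega12 (⇑x) x' * (omega13 (⇑x) x' + omega23 (⇑x) x')
      = (omega13 (⇑x) x' + omega23 (⇑x) x') * omega12 (⇑x) x' := by
  have hrep : ∀ (u : L) (c : ι), B u (x' c) = x.repr u c := by
    intro u c
    conv_lhs => rw [← x.sum_repr u]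
    simp [map_sum, hdual, Finset.sum_ite_eq', -Module.Basis.sum_repr]
  have expand1 : ∀ u : L, ∑ c, B u (x' c) • x c = u := by
    intro u; simp only [hrep]; exact x.sum_repr u
  have expand2 : ∀ u : L, ∑ c, B (x c) u • x' c = u := by
    intro u
    have h0 : ∀ d : ι, B (x d) (u - ∑ c, B (x c) u • x' c) = 0 := by
      intro d
      simp [map_sub, map_sum, map_smul, hdual, smul_eq_mul, Finset.sum_ite_eq, mul_comm]
    have hw : u - ∑ c, B (x c) u • x' c = 0 := by
      apply hB_nondeg
      intro v
      have hv : ∀ d : ι, B (u - ∑ c, B (x c) u • x' c) (x d) = 0 := by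
        intro d; rw [hB_symm]; exact h0 d
      conv_lhs => rw [← x.sum_repr v]
      rw [map_sum]
      simp only [map_smul, hv, smul_zero, Finset.sum_const_zero]
    exact (sub_eq_zero.mp hw).symm
  have keyL : ∀ y : L, ∑ a : ι, ((⁅x a, y⁆ : L) ⊗ₜ[ℂ] x' a + (x a) ⊗ₜ[ℂ] (⁅x' a, y⁆ : L))
      = (0 : L ⊗[ℂ] L) := by
    intro y
    have e1 : ∀ a : ι, (⁅x a, y⁆ : L) ⊗ₜ[ℂ] x' a
        = ∑ c : ι, B ⁅x a, y⁆ (x' c) • ((x c) ⊗ₜ[ℂ] x' a) := by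
      intro a
      conv_lhs => rw [← expand1 ⁅x a, y⁆]
      rw [TensorProduct.sum_tmul]
      simp [TensorProduct.smul_tmul']
    have e2 : ∀ a : ι, (x a) ⊗ₜ[ℂ] (⁅x' a, y⁆ : L)
        = ∑ c : ι, B (x c) ⁅x' a, y⁆ • ((x a) ⊗ₜ[ℂ] x' c) := by
      intro a
      conv_lhs => rw [← expand2 ⁅x' a, y⁆]
      rw [TensorProduct.tmul_sum]
      simp [TensorProduct.tmul_smul]
    have hcoef : ∀ a c : ι, B ⁅x a, y⁆ (x' c) + B (x a) ⁅x' c, y⁆ = 0 := by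
      intro a c
      have h1 := hB_inv (x a) y (x' c)
      have h2 : (⁅y, x' c⁆ : L) = -⁅x' c, y⁆ := (lie_skew y (x' c)).symm
      rw [h1, h2, map_neg]
      ring
    simp only [e1, e2, Finset.sum_add_distrib]
    rw [Finset.sum_comm (s := Finset.univ) (t := Finset.univ)
      (f := fun a c => B (x c) ⁅x' a, y⁆ • ((x a) ⊗ₜ[ℂ] x' c))]
    rw [← Finset.sum_add_distrib]
    apply Finset.sum_eq_zero
    intro a _
    rw [← Finset.sum_add_distrib]
    apply Finset.sum_eq_zero
    intro c _
    rw [← add_smul, hcoef, zero_smul]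
  have key3 : ∀ b : ι, ∑ a : ι,
      ((UniversalEnvelopingAlgebra.ι ℂ ⁅x a, x b⁆) ⊗ₜ[ℂ]
        ((UniversalEnvelopingAlgebra.ι ℂ (x' a)) ⊗ₜ[ℂ] (UniversalEnvelopingAlgebra.ι ℂ (x' b)))
      + (UniversalEnvelopingAlgebra.ι ℂ (x a)) ⊗ₜ[ℂ]
        ((UniversalEnvelopingAlgebra.ι ℂ ⁅x' a, x b⁆) ⊗ₜ[ℂ]
          (UniversalEnvelopingAlgebra.ι ℂ (x' b)))) = 0 := by
    intro b
    let g : L →ₗ[ℂ] (UniversalEnvelopingAlgebra ℂ L ⊗[ℂ] UniversalEnvelopingAlgebra ℂ L) :=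
      ((TensorProduct.mk ℂ _ _).flip (UniversalEnvelopingAlgebra.ι ℂ (x' b))).comp
        (UniversalEnvelopingAlgebra.ι ℂ).toLinearMap
    have h := congrArg
      (TensorProduct.map (UniversalEnvelopingAlgebra.ι ℂ).toLinearMap g) (keyL (x b))
    simpa [g, map_sum, TensorProduct.map_tmul] using h
  have h1213 : omega12 (⇑x) x' * omega13 (⇑x) x' - omega13 (⇑x) x' * omega12 (⇑x) x'
      = ∑ b : ι, ∑ a : ι, (UniversalEnvelopingAlgebra.ι ℂ ⁅x a, x b⁆) ⊗ₜ[ℂ]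
          ((UniversalEnvelopingAlgebra.ι ℂ (x' a)) ⊗ₜ[ℂ]
            (UniversalEnvelopingAlgebra.ι ℂ (x' b))) := by
    unfold omega12 omega13
    rw [Finset.sum_mul_sum, Finset.sum_mul_sum, Finset.sum_comm]
    rw [← Finset.sum_sub_distrib]
    refine Finset.sum_congr rfl fun b _ => ?_
    rw [← Finset.sum_sub_distrib]
    refine Finset.sum_congr rfl fun a _ => ?_
    rw [LieHom.map_lie, Ring.lie_def, TensorProduct.sub_tmul]
    simp [Algebra.TensorProduct.tmul_mul_tmul]
  have h1223 : omega12 (⇑x) x' * omega23 (⇑x) x' - omega23 (⇑x) x' * omega12 (⇑x) x'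
      = ∑ b : ι, ∑ a : ι, (UniversalEnvelopingAlgebra.ι ℂ (x a)) ⊗ₜ[ℂ]
          ((UniversalEnvelopingAlgebra.ι ℂ ⁅x' a, x b⁆) ⊗ₜ[ℂ]
            (UniversalEnvelopingAlgebra.ι ℂ (x' b))) := by
    unfold omega12 omega23
    rw [Finset.sum_mul_sum, Finset.sum_mul_sum, Finset.sum_comm]
    rw [← Finset.sum_sub_distrib]
    refine Finset.sum_congr rfl fun b _ => ?_
    rw [← Finset.sum_sub_distrib]
    refine Finset.sum_congr rfl fun a _ => ?_
    rw [LieHom.map_lie, Ring.lie_def, TensorProduct.sub_tmul, TensorProduct.tmul_sub]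
    simp [Algebra.TensorProduct.tmul_mul_tmul]
  rw [← sub_eq_zero, mul_add, add_mul]
  have hsplit : ∀ A B C D : UniversalEnvelopingAlgebra ℂ L ⊗[ℂ]
      (UniversalEnvelopingAlgebra ℂ L ⊗[ℂ] UniversalEnvelopingAlgebra ℂ L),
      A + B - (C + D) = (A - C) + (B - D) := fun A B C D => by abel
  rw [hsplit, h1213, h1223, ← Finset.sum_add_distrib]
  refine Finset.sum_eq_zero fun b _ => ?_
  rw [← Finset.sum_add_distrib]
  exact key3 b
end

section
/- The Gaudin Hamiltonians pairwise commute: with 𝔤, B, {x_a}, {x^a} as in the context, for any 𝔤-modules M₁, …, M_ℓ (ℓ ≥ 2) and any distinct complex numbers z₁, …, z_ℓ, the operators H^1, …, H^ℓ on M₁ ⊗ ⋯ ⊗ M_ℓ satisfy H^i ∘ H^k = H^k ∘ H^i for all 1 ≤ i, k ≤ ℓ. -/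
open scoped TensorProduct

/-- The operator `x^{(i)}` on `M₁ ⊗ ⋯ ⊗ M_ℓ` acting as `x` on the `i`-th tensor factor
and as the identity on the others. -/
noncomputable def factorAction {L : Type*} [LieRing L] [LieAlgebra ℂ L]
    {ℓ : ℕ} (M : Fin ℓ → Type*) [∀ j, AddCommGroup (M j)] [∀ j, Module ℂ (M j)]
    [∀ j, LieRingModule L (M j)] [∀ j, LieModule ℂ L (M j)]
    (i : Fin ℓ) (x : L) :
    (⨂[ℂ] j, M j) →ₗ[ℂ] ⨂[ℂ] j, M j :=
  PiTensorProduct.map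
    (Function.update (fun j => (LinearMap.id : M j →ₗ[ℂ] M j)) i
      (LieModule.toEnd ℂ L (M i) x))

/-- `Ω^{(ij)} = Σ_a x_a^{(i)} ∘ (x^a)^{(j)}` on `M₁ ⊗ ⋯ ⊗ M_ℓ`, for a family
`{x_a}` with dual family `{x^a}`. -/
noncomputable def gaudinOmega {L : Type*} [LieRing L] [LieAlgebra ℂ L]
    {ι : Type*} [Fintype ι] (x x' : ι → L)
    {ℓ : ℕ} (M : Fin ℓ → Type*) [∀ j, AddCommGroup (M j)] [∀ j, Module ℂ (M j)]
    [∀ j, LieRingModule L (M j)] [∀ j, LieModule ℂ L (M j)]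
    (i j : Fin ℓ) :
    (⨂[ℂ] k, M k) →ₗ[ℂ] ⨂[ℂ] k, M k :=
  ∑ a : ι, factorAction M i (x a) ∘ₗ factorAction M j (x' a)

/-- The Gaudin Hamiltonian `H^i = Σ_{j ≠ i} Ω^{(ij)}/(z_i − z_j)` on `M₁ ⊗ ⋯ ⊗ M_ℓ`. -/
noncomputable def gaudinH {L : Type*} [LieRing L] [LieAlgebra ℂ L]
    {ι : Type*} [Fintype ι] (x x' : ι → L)
    {ℓ : ℕ} (M : Fin ℓ → Type*) [∀ j, AddCommGroup (M j)] [∀ j, Module ℂ (M j)]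
    [∀ j, LieRingModule L (M j)] [∀ j, LieModule ℂ L (M j)]
    (z : Fin ℓ → ℂ) (i : Fin ℓ) :
    (⨂[ℂ] k, M k) →ₗ[ℂ] ⨂[ℂ] k, M k :=
  ∑ j ∈ Finset.univ.filter (fun j => j ≠ i),
    (z i - z j)⁻¹ • gaudinOmega x x' M i j

section aux
variable {L : Type*} [LieRing L] [LieAlgebra ℂ L]
    {ℓ : ℕ} (M : Fin ℓ → Type*) [∀ j, AddCommGroup (M j)] [∀ j, Module ℂ (M j)]
    [∀ j, LieRingModule L (M j)] [∀ j, LieModule ℂ L (M j)]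

lemma fa_tprod (i : Fin ℓ) (y : L) (f : ∀ j, M j) :
    factorAction M i y (PiTensorProduct.tprod ℂ f)
      = PiTensorProduct.tprod ℂ (Function.update f i ⁅y, f i⁆) := by
  rw [factorAction, PiTensorProduct.map_tprod]
  congr 1
  ext j
  rcases eq_or_ne j i with rfl | h
  · simp
  · simp [Function.update_of_ne h]

lemma fa_add (i : Fin ℓ) (y y' : L) :
    factorAction M i (y + y') = factorAction M i y + factorAction M i y' := by
  ext f
  simp only [LinearMap.compMultilinearMap_apply, LinearMap.add_apply, fa_tprod, add_lie]
  rw [MultilinearMap.map_update_add]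

lemma fa_smul (i : Fin ℓ) (c : ℂ) (y : L) :
    factorAction M i (c • y) = c • factorAction M i y := by
  ext f
  simp only [LinearMap.compMultilinearMap_apply, LinearMap.smul_apply, fa_tprod, smul_lie]
  rw [MultilinearMap.map_update_smul]

end aux
section aux2
variable {L : Type*} [LieRing L] [LieAlgebra ℂ L]
    {ℓ : ℕ} (M : Fin ℓ → Type*) [∀ j, AddCommGroup (M j)] [∀ j, Module ℂ (M j)]
    [∀ j, LieRingModule L (M j)] [∀ j, LieModule ℂ L (M j)]

/-- `factorAction` as a linear map into the endomorphism algebra. -/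
noncomputable def FA (i : Fin ℓ) : L →ₗ[ℂ] Module.End ℂ (⨂[ℂ] j, M j) where
  toFun y := factorAction M i y
  map_add' y y' := fa_add M i y y'
  map_smul' c y := fa_smul M i c y

@[simp] lemma FA_apply (i : Fin ℓ) (y : L) : FA M i y = factorAction M i y := rfl

lemma FA_tprod (i : Fin ℓ) (y : L) (f : ∀ j, M j) :
    FA M i y (PiTensorProduct.tprod ℂ f)
      = PiTensorProduct.tprod ℂ (Function.update f i ⁅y, f i⁆) := fa_tprod M i y f

lemma FA_mul_comm {i j : Fin ℓ} (h : i ≠ j) (u v : L) :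
    FA M i u * FA M j v = FA M j v * FA M i u := by
  ext f
  simp only [LinearMap.compMultilinearMap_apply, Module.End.mul_apply, FA_tprod]
  rw [Function.update_of_ne h, Function.update_of_ne h.symm, Function.update_comm h]

lemma FA_lie (i : Fin ℓ) (u v : L) :
    FA M i u * FA M i v - FA M i v * FA M i u = FA M i ⁅u, v⁆ := by
  ext f
  simp only [LinearMap.compMultilinearMap_apply, LinearMap.sub_apply, Module.End.mul_apply,
    FA_tprod, Function.update_self, Function.update_idem]
  rw [← MultilinearMap.map_update_sub]
  congr 2
  rw [lie_lie]

end aux2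
section dual
variable {L : Type*} [LieRing L] [LieAlgebra ℂ L]
    {ι : Type*} [Fintype ι] [DecidableEq ι] (x : Module.Basis ι ℂ L)
    (B : L →ₗ[ℂ] L →ₗ[ℂ] ℂ)
    (hB_nondeg : ∀ u : L, (∀ v : L, B u v = 0) → u = 0)
    (hB_symm : ∀ u v : L, B u v = B v u)
    (hB_inv : ∀ u v w : L, B ⁅u, v⁆ w = B u ⁅v, w⁆)
    (x' : ι → L)
    (hdual : ∀ a b : ι, B (x a) (x' b) = if a = b then (1 : ℂ) else 0)

include hdual in
lemma expand1 (u : L) : ∑ b, B u (x' b) • x b = u := by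
  have h : (∑ b, (B.flip (x' b)).smulRight (x b)) = LinearMap.id := by
    apply x.ext
    intro a
    simp only [LinearMap.sum_apply, LinearMap.smulRight_apply, LinearMap.flip_apply,
      LinearMap.id_apply]
    rw [Finset.sum_eq_single a]
    · rw [hdual]; simp
    · intro b _ hb; rw [hdual]; simp [hb.symm]
    · simp
  have := congrArg (fun φ => φ u) h
  simpa using this

include hB_nondeg hB_symm hdual in
lemma expand2 (u : L) : ∑ b, B (x b) u • x' b = u := by
  set w := ∑ b, B (x b) u • x' b with hw
  have key : ∀ v : L, B v (w - u) = 0 := by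
    intro v
    have hv := expand1 x B x' hdual v
    rw [map_sub, ← hv]
    simp only [map_sum, map_smul, LinearMap.sum_apply, LinearMap.smul_apply, smul_eq_mul, hw,
      map_sum, map_smul]
    rw [sub_eq_zero]
    refine Finset.sum_congr rfl (fun b _ => ?_)
    rw [Finset.sum_eq_single b]
    · rw [hdual]; simp [mul_comm]
    · intro a _ ha; rw [hdual]; simp [ha]
    · simp
  have : w - u = 0 := by
    apply hB_nondeg
    intro v
    rw [hB_symm]; exact key v
  exact sub_eq_zero.mp this

end dual
section dual2
variable {L : Type*} [LieRing L] [LieAlgebra ℂ L]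
    {ι : Type*} [Fintype ι] [DecidableEq ι] (x : Module.Basis ι ℂ L)
    (B : L →ₗ[ℂ] L →ₗ[ℂ] ℂ)
    (hB_nondeg : ∀ u : L, (∀ v : L, B u v = 0) → u = 0)
    (hB_symm : ∀ u v : L, B u v = B v u)
    (hB_inv : ∀ u v w : L, B ⁅u, v⁆ w = B u ⁅v, w⁆)
    (x' : ι → L)
    (hdual : ∀ a b : ι, B (x a) (x' b) = if a = b then (1 : ℂ) else 0)
    {V : Type*} [AddCommGroup V] [Module ℂ V]

include hB_nondeg hB_symm hB_inv hdual in
lemma dual_swap (φ : L →ₗ[ℂ] L →ₗ[ℂ] V) (y : L) :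
    ∑ a, φ ⁅x a, y⁆ (x' a) = ∑ a, φ (x a) ⁅y, x' a⁆ := by
  have lhs : ∀ a : ι, φ ⁅x a, y⁆ (x' a) = ∑ b, B ⁅x a, y⁆ (x' b) • φ (x b) (x' a) := by
    intro a
    conv_lhs => rw [← expand1 x B x' hdual ⁅x a, y⁆]
    simp [map_sum]
  have rhs : ∀ b : ι, φ (x b) ⁅y, x' b⁆ = ∑ a, B (x a) ⁅y, x' b⁆ • φ (x b) (x' a) := by
    intro b
    conv_lhs => rw [← expand2 x B hB_nondeg hB_symm x' hdual ⁅y, x' b⁆]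
    simp [map_sum]
  simp only [lhs, rhs]
  rw [Finset.sum_comm]
  refine Finset.sum_congr rfl fun b _ => Finset.sum_congr rfl fun a _ => ?_
  rw [hB_inv]

include hdual hB_symm in
lemma dual_symm (φ : L →ₗ[ℂ] L →ₗ[ℂ] V) :
    ∑ a, φ (x a) (x' a) = ∑ a, φ (x' a) (x a) := by
  have lhs : ∀ a : ι, φ (x a) (x' a) = ∑ b, B (x' a) (x' b) • φ (x a) (x b) := by
    intro a
    conv_lhs => rw [show φ (x a) (x' a) = φ (x a) (∑ b, B (x' a) (x' b) • x b) by
      rw [expand1 x B x' hdual]]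
    simp [map_sum]
  have rhs : ∀ a : ι, φ (x' a) (x a) = ∑ b, B (x' a) (x' b) • φ (x b) (x a) := by
    intro a
    conv_lhs => rw [show φ (x' a) (x a) = φ (∑ b, B (x' a) (x' b) • x b) (x a) by
      rw [expand1 x B x' hdual]]
    simp [map_sum]
  simp only [lhs, rhs]
  rw [Finset.sum_comm]
  refine Finset.sum_congr rfl fun a _ => Finset.sum_congr rfl fun b _ => ?_
  rw [hB_symm (x' a) (x' b)]

end dual2
section ringlemmas
variable {R : Type*} [Ring R]

lemma middle_swap {A B C D : R} (h : Commute B C) : (A*B)*(C*D) = (A*C)*(B*D) := by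
  rw [mul_assoc, ← mul_assoc B C D, h.eq, mul_assoc C B D, ← mul_assoc]

lemma assoc4 (A B C D : R) : (A*B)*(C*D) = A*((B*C)*D) := by
  rw [mul_assoc, ← mul_assoc B C D]

lemma four_rearrange {A B C D : R}
    (h1 : Commute C A) (h2 : Commute D A) (h3 : Commute D B) :
    (C*D)*(A*B) = A*((C*B)*D) := by
  calc (C*D)*(A*B) = (C*A)*(D*B) := middle_swap h2
    _ = (A*C)*(B*D) := by rw [h1.eq, h3.eq]
    _ = A*((C*B)*D) := assoc4 A C B D

end ringlemmas

section omega
variable {L : Type*} [LieRing L] [LieAlgebra ℂ L]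
    {ℓ : ℕ} {M : Fin ℓ → Type*} [∀ j, AddCommGroup (M j)] [∀ j, Module ℂ (M j)]
    [∀ j, LieRingModule L (M j)] [∀ j, LieModule ℂ L (M j)]

lemma FA_commute {i j : Fin ℓ} (h : i ≠ j) (u v : L) :
    Commute (FA M i u) (FA M j v) := FA_mul_comm M h u v

/-- Bilinear helper `(u, v) ↦ FAᵢ u * (FAⱼ v * C)`. -/
noncomputable def trilin (i j : Fin ℓ) (C : Module.End ℂ (⨂[ℂ] k, M k)) :
    L →ₗ[ℂ] L →ₗ[ℂ] Module.End ℂ (⨂[ℂ] k, M k) :=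
  LinearMap.mk₂ ℂ (fun u v => FA M i u * (FA M j v * C))
    (by intros; simp [map_add, add_mul])
    (by intros; simp [map_smul, smul_mul_assoc])
    (by intros; simp [map_add, add_mul, mul_add])
    (by intros; simp [map_smul, smul_mul_assoc, mul_smul_comm])

@[simp] lemma trilin_apply (i j : Fin ℓ) (C : Module.End ℂ (⨂[ℂ] k, M k)) (u v : L) :
    trilin i j C u v = FA M i u * (FA M j v * C) := rfl

variable {ι : Type*} [Fintype ι] [DecidableEq ι]

lemma omega_eq (x x' : ι → L) (i j : Fin ℓ) :
    gaudinOmega x x' M i j = ∑ a, FA M i (x a) * FA M j (x' a) := rfl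

end omega
set_option linter.unusedSectionVars false

section omegakey
variable {L : Type*} [LieRing L] [LieAlgebra ℂ L]
    {ℓ : ℕ} {M : Fin ℓ → Type*} [∀ j, AddCommGroup (M j)] [∀ j, Module ℂ (M j)]
    [∀ j, LieRingModule L (M j)] [∀ j, LieModule ℂ L (M j)]
    {ι : Type*} [Fintype ι] [DecidableEq ι] (x : Module.Basis ι ℂ L)
    (B : L →ₗ[ℂ] L →ₗ[ℂ] ℂ)
    (hB_nondeg : ∀ u : L, (∀ v : L, B u v = 0) → u = 0)
    (hB_symm : ∀ u v : L, B u v = B v u)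
    (hB_inv : ∀ u v w : L, B ⁅u, v⁆ w = B u ⁅v, w⁆)
    (x' : ι → L)
    (hdual : ∀ a b : ι, B (x a) (x' b) = if a = b then (1 : ℂ) else 0)

include B hB_symm hdual in
lemma omega_symm {i j : Fin ℓ} (h : i ≠ j) :
    gaudinOmega (⇑x) x' M i j = gaudinOmega (⇑x) x' M j i := by
  rw [omega_eq, omega_eq]
  have step1 : ∀ a : ι, FA M i (x a) * FA M j (x' a) = (trilin j i 1) (x' a) (x a) := by
    intro a
    rw [trilin_apply, mul_one, (FA_commute h (x a) (x' a)).eq]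
  simp only [step1]
  rw [← dual_symm x B hB_symm x' hdual (trilin j i 1)]
  simp only [trilin_apply, mul_one]

include B hB_nondeg hB_symm hB_inv hdual in
lemma omega_key {i j k : Fin ℓ} (hij : i ≠ j) (hik : i ≠ k) (hjk : j ≠ k) :
    (gaudinOmega (⇑x) x' M i j * gaudinOmega (⇑x) x' M i k
      - gaudinOmega (⇑x) x' M i k * gaudinOmega (⇑x) x' M i j)
    + (gaudinOmega (⇑x) x' M i j * gaudinOmega (⇑x) x' M j k
      - gaudinOmega (⇑x) x' M j k * gaudinOmega (⇑x) x' M i j) = 0 := by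
  have e1 : gaudinOmega (⇑x) x' M i j * gaudinOmega (⇑x) x' M i k
      = ∑ b, ∑ a, (FA M i (x a) * FA M i (x b)) * (FA M j (x' a) * FA M k (x' b)) := by
    rw [omega_eq, omega_eq, Finset.sum_mul_sum, Finset.sum_comm]
    exact Finset.sum_congr rfl fun b _ => Finset.sum_congr rfl fun a _ =>
      middle_swap (FA_commute hij.symm (x' a) (x b))
  have e2 : gaudinOmega (⇑x) x' M i k * gaudinOmega (⇑x) x' M i j
      = ∑ b, ∑ a, (FA M i (x b) * FA M i (x a)) * (FA M j (x' a) * FA M k (x' b)) := by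
    rw [omega_eq, omega_eq, Finset.sum_mul_sum]
    refine Finset.sum_congr rfl fun b _ => Finset.sum_congr rfl fun a _ => ?_
    rw [middle_swap (FA_commute hik.symm (x' b) (x a)),
      (FA_commute hjk.symm (x' b) (x' a)).eq]
  have e3 : gaudinOmega (⇑x) x' M i j * gaudinOmega (⇑x) x' M i k
      - gaudinOmega (⇑x) x' M i k * gaudinOmega (⇑x) x' M i j
      = ∑ b, ∑ a, FA M i (x a) * (FA M j ⁅x b, x' a⁆ * FA M k (x' b)) := by
    rw [e1, e2, ← Finset.sum_sub_distrib]
    refine Finset.sum_congr rfl fun b _ => ?_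
    rw [← Finset.sum_sub_distrib]
    have : ∀ a : ι, (FA M i (x a) * FA M i (x b)) * (FA M j (x' a) * FA M k (x' b))
        - (FA M i (x b) * FA M i (x a)) * (FA M j (x' a) * FA M k (x' b))
        = (trilin i j (FA M k (x' b))) ⁅x a, x b⁆ (x' a) := by
      intro a
      rw [trilin_apply, ← sub_mul, FA_lie]
    simp only [this]
    rw [dual_swap x B hB_nondeg hB_symm hB_inv x' hdual (trilin i j (FA M k (x' b))) (x b)]
    simp only [trilin_apply]
  have f1 : gaudinOmega (⇑x) x' M i j * gaudinOmega (⇑x) x' M j k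
      = ∑ b, ∑ a, FA M i (x a) * ((FA M j (x' a) * FA M j (x b)) * FA M k (x' b)) := by
    rw [omega_eq, omega_eq, Finset.sum_mul_sum, Finset.sum_comm]
    exact Finset.sum_congr rfl fun b _ => Finset.sum_congr rfl fun a _ =>
      assoc4 _ _ _ _
  have f2 : gaudinOmega (⇑x) x' M j k * gaudinOmega (⇑x) x' M i j
      = ∑ b, ∑ a, FA M i (x a) * ((FA M j (x b) * FA M j (x' a)) * FA M k (x' b)) := by
    rw [omega_eq, omega_eq, Finset.sum_mul_sum]
    exact Finset.sum_congr rfl fun b _ => Finset.sum_congr rfl fun a _ =>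
      four_rearrange (FA_commute hij.symm (x b) (x a)) (FA_commute hik.symm (x' b) (x a))
        (FA_commute hjk.symm (x' b) (x' a))
  have f3 : gaudinOmega (⇑x) x' M i j * gaudinOmega (⇑x) x' M j k
      - gaudinOmega (⇑x) x' M j k * gaudinOmega (⇑x) x' M i j
      = ∑ b, ∑ a, FA M i (x a) * (FA M j ⁅x' a, x b⁆ * FA M k (x' b)) := by
    rw [f1, f2, ← Finset.sum_sub_distrib]
    refine Finset.sum_congr rfl fun b _ => ?_
    rw [← Finset.sum_sub_distrib]
    refine Finset.sum_congr rfl fun a _ => ?_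
    rw [← mul_sub, ← sub_mul, FA_lie]
  rw [e3, f3, ← Finset.sum_add_distrib]
  refine Finset.sum_eq_zero fun b _ => ?_
  rw [← Finset.sum_add_distrib]
  refine Finset.sum_eq_zero fun a _ => ?_
  have hzero : (⁅x b, x' a⁆ : L) + ⁅x' a, x b⁆ = 0 := by
    rw [← lie_skew (x' a) (x b)]; exact add_neg_cancel _
  rw [← mul_add, ← add_mul, ← map_add, hzero, map_zero, zero_mul, mul_zero]

end omegakey
section disjoint
variable {L : Type*} [LieRing L] [LieAlgebra ℂ L]
    {ℓ : ℕ} {M : Fin ℓ → Type*} [∀ j, AddCommGroup (M j)] [∀ j, Module ℂ (M j)]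
    [∀ j, LieRingModule L (M j)] [∀ j, LieModule ℂ L (M j)]
    {ι : Type*} [Fintype ι] [DecidableEq ι]

lemma omega_mul_comm (x x' : ι → L) {i j p q : Fin ℓ}
    (hip : i ≠ p) (hiq : i ≠ q) (hjp : j ≠ p) (hjq : j ≠ q) :
    gaudinOmega x x' M i j * gaudinOmega x x' M p q
      = gaudinOmega x x' M p q * gaudinOmega x x' M i j := by
  rw [omega_eq, omega_eq, Finset.sum_mul_sum, Finset.sum_mul_sum, Finset.sum_comm]
  refine Finset.sum_congr rfl fun b _ => Finset.sum_congr rfl fun a _ => ?_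
  have h1 : Commute (FA M i (x a)) (FA M p (x b) * FA M q (x' b)) :=
    (FA_commute hip _ _).mul_right (FA_commute hiq _ _)
  have h2 : Commute (FA M j (x' a)) (FA M p (x b) * FA M q (x' b)) :=
    (FA_commute hjp _ _).mul_right (FA_commute hjq _ _)
  exact (h1.mul_left h2).eq

end disjoint

lemma scalar_identity {p q r : ℂ} (hpq : p ≠ q) (hqr : q ≠ r) (hpr : p ≠ r) :
    (p - q)⁻¹ * (q - r)⁻¹ + (p - r)⁻¹ * (q - p)⁻¹ - (p - r)⁻¹ * (q - r)⁻¹ = 0 := by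
  have h1 : p - q ≠ 0 := sub_ne_zero.mpr hpq
  have h2 : q - r ≠ 0 := sub_ne_zero.mpr hqr
  have h3 : p - r ≠ 0 := sub_ne_zero.mpr hpr
  have h4 : q - p ≠ 0 := sub_ne_zero.mpr hpq.symm
  field_simp
  ring

/-- The Gaudin Hamiltonians pairwise commute: for a finite-dimensional complex Lie
algebra with nondegenerate invariant symmetric bilinear form `B`, basis `{x_a}` and
`B`-dual basis `{x^a}`, modules `M₁, …, M_ℓ` (`ℓ ≥ 2`) and distinct complex numbers
`z₁, …, z_ℓ`, one has `H^i ∘ H^k = H^k ∘ H^i` for all `i, k`. -/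
theorem gaudin_hamiltonians_commute
    {L : Type*} [LieRing L] [LieAlgebra ℂ L] [FiniteDimensional ℂ L]
    {ι : Type*} [Fintype ι] [DecidableEq ι] (x : Module.Basis ι ℂ L)
    (B : L →ₗ[ℂ] L →ₗ[ℂ] ℂ)
    (hB_nondeg : ∀ u : L, (∀ v : L, B u v = 0) → u = 0)
    (hB_symm : ∀ u v : L, B u v = B v u)
    (hB_inv : ∀ u v w : L, B ⁅u, v⁆ w = B u ⁅v, w⁆)
    (x' : ι → L)
    (hdual : ∀ a b : ι, B (x a) (x' b) = if a = b then (1 : ℂ) else 0)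
    {ℓ : ℕ} (hℓ : 2 ≤ ℓ)
    (M : Fin ℓ → Type*) [∀ j, AddCommGroup (M j)] [∀ j, Module ℂ (M j)]
    [∀ j, LieRingModule L (M j)] [∀ j, LieModule ℂ L (M j)]
    (z : Fin ℓ → ℂ) (hz : Function.Injective z)
    (i k : Fin ℓ) :
    gaudinH (⇑x) x' M z i ∘ₗ gaudinH (⇑x) x' M z k
      = gaudinH (⇑x) x' M z k ∘ₗ gaudinH (⇑x) x' M z i := by
  rcases eq_or_ne i k with rfl | hik
  · rfl
  rw [← Module.End.mul_eq_comp, ← Module.End.mul_eq_comp, ← sub_eq_zero]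
  set Ω : Fin ℓ → Fin ℓ → Module.End ℂ (⨂[ℂ] j, M j) :=
    fun p q => gaudinOmega (⇑x) x' M p q with hΩ
  set c : Fin ℓ → Fin ℓ → ℂ := fun p q => (z p - z q)⁻¹ with hc
  set G : Fin ℓ → Fin ℓ → Module.End ℂ (⨂[ℂ] j, M j) :=
    fun j l => (c i j * c k l) • (Ω i j * Ω k l - Ω k l * Ω i j) with hG
  have smul_mul : ∀ (a b : ℂ) (P Q : Module.End ℂ (⨂[ℂ] j, M j)),
      (a • P) * (b • Q) = (a * b) • (P * Q) := by
    intro a b P Q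
    rw [smul_mul_assoc, mul_smul_comm, smul_smul]
  have expand : ∀ p q : Fin ℓ,
      gaudinH (⇑x) x' M z p * gaudinH (⇑x) x' M z q
        = ∑ j ∈ Finset.univ.filter (fun j => j ≠ p),
            ∑ l ∈ Finset.univ.filter (fun l => l ≠ q),
              (c p j * c q l) • (Ω p j * Ω q l) := by
    intro p q
    rw [gaudinH, gaudinH, Finset.sum_mul_sum]
    exact Finset.sum_congr rfl fun j _ => Finset.sum_congr rfl fun l _ => smul_mul _ _ _ _
  have hD : gaudinH (⇑x) x' M z i * gaudinH (⇑x) x' M z k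
      - gaudinH (⇑x) x' M z k * gaudinH (⇑x) x' M z i
      = ∑ j ∈ Finset.univ.filter (fun j => j ≠ i),
          ∑ l ∈ Finset.univ.filter (fun l => l ≠ k), G j l := by
    rw [expand i k, expand k i, Finset.sum_comm
      (s := Finset.univ.filter (fun j => j ≠ k)) (t := Finset.univ.filter (fun l => l ≠ i)),
      ← Finset.sum_sub_distrib]
    refine Finset.sum_congr rfl fun j _ => ?_
    rw [← Finset.sum_sub_distrib]
    refine Finset.sum_congr rfl fun l _ => ?_
    simp only [hG, smul_sub, mul_comm (c k l) (c i j)]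
  rw [hD]
  -- index bookkeeping
  have hk_mem : k ∈ Finset.univ.filter (fun j => j ≠ i) := by simp [hik.symm]
  have hi_mem : i ∈ Finset.univ.filter (fun l => l ≠ k) := by simp [hik]
  set E : Finset (Fin ℓ) := (Finset.univ.filter (fun l => l ≠ k)).erase i with hE
  have hEs : (Finset.univ.filter (fun j => j ≠ i)).erase k = E := by
    ext m
    simp only [hE, Finset.mem_erase, Finset.mem_filter, Finset.mem_univ, true_and]
    tauto
  have hmemE : ∀ m, m ∈ E ↔ (m ≠ i ∧ m ≠ k) := by
    intro m
    simp only [hE, Finset.mem_erase, Finset.mem_filter, Finset.mem_univ, true_and]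
  -- inner sums
  have inner_k : ∑ l ∈ Finset.univ.filter (fun l => l ≠ k), G k l
      = G k i + ∑ l ∈ E, G k l := by
    rw [← Finset.add_sum_erase _ _ hi_mem]
  have inner_m : ∀ m ∈ E, ∑ l ∈ Finset.univ.filter (fun l => l ≠ k), G m l
      = G m i + G m m := by
    intro m hm
    obtain ⟨hmi, hmk⟩ := (hmemE m).mp hm
    rw [← Finset.add_sum_erase _ _ hi_mem]
    congr 1
    refine Finset.sum_eq_single_of_mem m hm ?_
    intro l hl hlm
    obtain ⟨hli, hlk⟩ := (hmemE l).mp hl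
    have h0 : Ω i m * Ω k l = Ω k l * Ω i m :=
      omega_mul_comm (⇑x) x' hik hli.symm hmk hlm.symm
    simp only [hG, h0, sub_self, smul_zero]
  -- outer split
  rw [← Finset.add_sum_erase _ _ hk_mem, hEs, inner_k]
  have hsum_m : ∑ m ∈ E, (∑ l ∈ Finset.univ.filter (fun l => l ≠ k), G m l)
      = ∑ m ∈ E, (G m i + G m m) := Finset.sum_congr rfl inner_m
  rw [hsum_m]
  have hGki : G k i = 0 := by
    have h0 : Ω k i = Ω i k := (omega_symm (M := M) x B hB_symm x' hdual hik).symm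
    simp only [hG, h0, sub_self, smul_zero]
  rw [hGki, zero_add, ← Finset.sum_add_distrib]
  refine Finset.sum_eq_zero fun m hm => ?_
  obtain ⟨hmi, hmk⟩ := (hmemE m).mp hm
  set C : Module.End ℂ (⨂[ℂ] j, M j) := Ω i m * Ω i k - Ω i k * Ω i m with hC
  have h1 : Ω i k * Ω k m - Ω k m * Ω i k = C := by
    have hkey := omega_key (M := M) x B hB_nondeg hB_symm hB_inv x' hdual hik hmi.symm hmk.symm
    have := eq_neg_of_add_eq_zero_right hkey
    rw [this, neg_sub]
  have h2 : Ω i m * Ω k i - Ω k i * Ω i m = C := by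
    have hsy : Ω k i = Ω i k := by
      simp only [hΩ]; exact omega_symm (M := M) x B hB_symm x' hdual hik.symm
    rw [hsy]
  have h3 : Ω i m * Ω k m - Ω k m * Ω i m = -C := by
    have hkey := omega_key (M := M) x B hB_nondeg hB_symm hB_inv x' hdual hmi.symm hik hmk
    have heq := eq_neg_of_add_eq_zero_right hkey
    have hsy : Ω k m = Ω m k := by
      simp only [hΩ]; exact omega_symm (M := M) x B hB_symm x' hdual hmk.symm
    rw [hsy, heq, hC]
  have hzik : z i ≠ z k := fun h => hik (hz h)
  have hzkm : z k ≠ z m := fun h => hmk (hz h.symm)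
  have hzim : z i ≠ z m := fun h => hmi (hz h.symm)
  have hs : c i k * c k m + (c i m * c k i + -(c i m * c k m)) = 0 := by
    have hsi := scalar_identity hzik hzkm hzim
    rw [hc]
    linear_combination hsi
  simp only [hG, h1, h2, h3, smul_neg, ← neg_smul, ← add_smul, hs, zero_smul]
end

section
/- Each Gaudin Hamiltonian is a homomorphism of 𝔤-modules: with 𝔤, B, {x_a}, {x^a} as in the context, for any 𝔤-modules M₁, …, M_ℓ (ℓ ≥ 2) and distinct complex numbers z₁, …, z_ℓ, every H^i commutes with the diagonal action of 𝔤 on M₁ ⊗ ⋯ ⊗ M_ℓ, i.e. H^i(x·u) = x·H^i(u) for all x ∈ 𝔤 and u ∈ M₁ ⊗ ⋯ ⊗ M_ℓ, where x acts diagonally: x·(m₁⊗⋯⊗m_ℓ) = Σ_{i=1}^ℓ m₁⊗⋯⊗(x·m_i)⊗⋯⊗m_ℓ. -/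
open scoped TensorProduct

/-- The diagonal action of `x ∈ L` on `M₁ ⊗ ⋯ ⊗ M_ℓ`:
`x·(m₁⊗⋯⊗m_ℓ) = Σ_i m₁⊗⋯⊗(x·m_i)⊗⋯⊗m_ℓ`. -/
noncomputable def diagAction {L : Type*} [LieRing L] [LieAlgebra ℂ L]
    {ℓ : ℕ} (M : Fin ℓ → Type*) [∀ j, AddCommGroup (M j)] [∀ j, Module ℂ (M j)]
    [∀ j, LieRingModule L (M j)] [∀ j, LieModule ℂ L (M j)]
    (x : L) :
    (⨂[ℂ] k, M k) →ₗ[ℂ] ⨂[ℂ] k, M k :=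
  ∑ i : Fin ℓ, factorAction M i x

section Aux
variable {L : Type*} [LieRing L] [LieAlgebra ℂ L]
    {ℓ : ℕ} (M : Fin ℓ → Type*) [∀ j, AddCommGroup (M j)] [∀ j, Module ℂ (M j)]
    [∀ j, LieRingModule L (M j)] [∀ j, LieModule ℂ L (M j)]

lemma factorAction_tprod (i : Fin ℓ) (x : L) (m : ∀ j, M j) :
    factorAction M i x (PiTensorProduct.tprod ℂ m)
      = PiTensorProduct.tprod ℂ (Function.update m i ⁅x, m i⁆) := by
  rw [factorAction, PiTensorProduct.map_tprod]
  congr 1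
  funext j
  rcases eq_or_ne j i with rfl | h
  · simp [LieModule.toEnd_apply_apply]
  · simp [Function.update_of_ne h]

lemma factorAction_mul_comm {i j : Fin ℓ} (h : i ≠ j) (u v : L) :
    factorAction M i u * factorAction M j v
      = factorAction M j v * factorAction M i u := by
  apply PiTensorProduct.ext
  ext m
  simp only [LinearMap.compMultilinearMap_apply, Module.End.mul_apply, factorAction_tprod]
  rw [Function.update_of_ne h.symm, Function.update_of_ne h, Function.update_comm h]

lemma factorAction_add (i : Fin ℓ) (u v : L) :
    factorAction M i (u + v) = factorAction M i u + factorAction M i v := by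
  apply PiTensorProduct.ext
  ext m
  simp only [LinearMap.compMultilinearMap_apply, LinearMap.add_apply, factorAction_tprod,
    add_lie]
  exact MultilinearMap.map_update_add _ m i _ _

lemma factorAction_smul (i : Fin ℓ) (c : ℂ) (u : L) :
    factorAction M i (c • u) = c • factorAction M i u := by
  apply PiTensorProduct.ext
  ext m
  simp only [LinearMap.compMultilinearMap_apply, LinearMap.smul_apply, factorAction_tprod,
    smul_lie]
  exact MultilinearMap.map_update_smul _ m i _ _

/-- `factorAction` bundled as a linear map in the Lie algebra argument. -/
noncomputable def factorActionHom (i : Fin ℓ) :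
    L →ₗ[ℂ] ((⨂[ℂ] j, M j) →ₗ[ℂ] ⨂[ℂ] j, M j) where
  toFun := factorAction M i
  map_add' := factorAction_add M i
  map_smul' := factorAction_smul M i

lemma factorAction_lie (i : Fin ℓ) (u v : L) :
    factorAction M i ⁅u, v⁆
      = factorAction M i u * factorAction M i v - factorAction M i v * factorAction M i u := by
  apply PiTensorProduct.ext
  ext m
  simp only [LinearMap.compMultilinearMap_apply, LinearMap.sub_apply, Module.End.mul_apply,
    factorAction_tprod, Function.update_self, Function.update_idem]
  rw [← MultilinearMap.map_update_sub]
  congr 1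
  rw [lie_lie]

end Aux

section Dual
variable {L : Type*} [LieRing L] [LieAlgebra ℂ L]
    {ι : Type*} [Fintype ι] [DecidableEq ι] (x : Module.Basis ι ℂ L)
    (B : L →ₗ[ℂ] L →ₗ[ℂ] ℂ) (x' : ι → L)

lemma expand1_s6 (hdual : ∀ a b : ι, B (x a) (x' b) = if a = b then (1 : ℂ) else 0)
    (v : L) : v = ∑ b : ι, (B v (x' b)) • x b := by
  have hv : B v = ∑ a : ι, x.repr v a • B (x a) := by
    conv_lhs => rw [← x.sum_repr v]
    simp only [map_sum, map_smul]
  have h : ∀ b, B v (x' b) = x.repr v b := by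
    intro b
    rw [hv]
    simp [LinearMap.sum_apply, hdual]
  simp only [h]
  exact (x.sum_repr v).symm

lemma expand2_s6 (hB_nondeg : ∀ u : L, (∀ v : L, B u v = 0) → u = 0)
    (hB_symm : ∀ u v : L, B u v = B v u)
    (hdual : ∀ a b : ι, B (x a) (x' b) = if a = b then (1 : ℂ) else 0)
    (v : L) : v = ∑ b : ι, (B v (x b)) • x' b := by
  have key : ∀ c : ι, B (v - ∑ b : ι, (B v (x b)) • x' b) (x c) = 0 := by
    intro c
    have : ∀ b : ι, B (x' b) (x c) = if c = b then (1:ℂ) else 0 := by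
      intro b; rw [hB_symm]; exact hdual c b
    simp [map_sub, map_sum, LinearMap.sum_apply, this, hB_symm v (x c)]
  have h0 : v - ∑ b : ι, (B v (x b)) • x' b = 0 := by
    apply hB_nondeg
    intro u
    rw [expand1_s6 x B x' hdual u]
    simp only [map_sum, map_smul, smul_eq_mul]
    rw [Finset.sum_eq_zero]
    intro c _
    rw [key c]; ring
  exact sub_eq_zero.mp h0

end Dual

section Main
variable {L : Type*} [LieRing L] [LieAlgebra ℂ L]
    {ι : Type*} [Fintype ι] [DecidableEq ι] (x : Module.Basis ι ℂ L)
    (B : L →ₗ[ℂ] L →ₗ[ℂ] ℂ) (x' : ι → L)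
    {ℓ : ℕ} (M : Fin ℓ → Type*) [∀ j, AddCommGroup (M j)] [∀ j, Module ℂ (M j)]
    [∀ j, LieRingModule L (M j)] [∀ j, LieModule ℂ L (M j)]

lemma omega_comm
    (hB_nondeg : ∀ u : L, (∀ v : L, B u v = 0) → u = 0)
    (hB_symm : ∀ u v : L, B u v = B v u)
    (hB_inv : ∀ u v w : L, B ⁅u, v⁆ w = B u ⁅v, w⁆)
    (hdual : ∀ a b : ι, B (x a) (x' b) = if a = b then (1 : ℂ) else 0)
    {i j : Fin ℓ} (hij : i ≠ j) (y : L) :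
    diagAction M y * gaudinOmega (⇑x) x' M i j
      = gaudinOmega (⇑x) x' M i j * diagAction M y := by
  -- commutator of the k-th diagonal piece with one summand of Ω
  have hC : ∀ k : Fin ℓ, ∀ a : ι,
      factorAction M k y * (factorAction M i (x a) * factorAction M j (x' a))
        - (factorAction M i (x a) * factorAction M j (x' a)) * factorAction M k y
        = (if k = i then factorAction M i ⁅y, x a⁆ * factorAction M j (x' a) else 0)
          + (if k = j then factorAction M i (x a) * factorAction M j ⁅y, x' a⁆ else 0) := by
    intro k a
    by_cases hki : k = i
    · subst hki
      have h2 : (factorAction M k (x a) * factorAction M j (x' a)) * factorAction M k y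
          = (factorAction M k (x a) * factorAction M k y) * factorAction M j (x' a) := by
        rw [mul_assoc, factorAction_mul_comm M hij.symm, ← mul_assoc]
      rw [if_pos rfl, if_neg hij, add_zero, factorAction_lie, sub_mul, ← mul_assoc, h2]
    by_cases hkj : k = j
    · subst hkj
      have h1 : factorAction M k y * (factorAction M i (x a) * factorAction M k (x' a))
          = factorAction M i (x a) * (factorAction M k y * factorAction M k (x' a)) := by
        rw [← mul_assoc, factorAction_mul_comm M hki, mul_assoc]
      rw [if_neg hki, zero_add, if_pos rfl, factorAction_lie, mul_sub, h1, mul_assoc]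
    · rw [if_neg hki, if_neg hkj, add_zero, sub_eq_zero, ← mul_assoc,
        factorAction_mul_comm M hki, mul_assoc,
        factorAction_mul_comm M hkj, ← mul_assoc]
  -- reduce to vanishing of total commutator
  rw [← sub_eq_zero]
  rw [show diagAction M y = ∑ k : Fin ℓ, factorAction M k y from rfl,
    show gaudinOmega (⇑x) x' M i j
      = ∑ a : ι, factorAction M i (x a) * factorAction M j (x' a) from rfl]
  rw [Finset.sum_mul, Finset.mul_sum, ← Finset.sum_sub_distrib]
  have step1 : ∀ k : Fin ℓ,
      factorAction M k y * (∑ a : ι, factorAction M i (x a) * factorAction M j (x' a))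
        - (∑ a : ι, factorAction M i (x a) * factorAction M j (x' a)) * factorAction M k y
      = ∑ a : ι,
          ((if k = i then factorAction M i ⁅y, x a⁆ * factorAction M j (x' a) else 0)
            + (if k = j then factorAction M i (x a) * factorAction M j ⁅y, x' a⁆ else 0)) := by
    intro k
    rw [Finset.mul_sum, Finset.sum_mul, ← Finset.sum_sub_distrib]
    exact Finset.sum_congr rfl fun a _ => hC k a
  calc (∑ k : Fin ℓ,
        (factorAction M k y * ∑ a : ι, factorAction M i (x a) * factorAction M j (x' a)
          - (∑ a : ι, factorAction M i (x a) * factorAction M j (x' a)) * factorAction M k y))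
      = ∑ k : Fin ℓ, ∑ a : ι,
          ((if k = i then factorAction M i ⁅y, x a⁆ * factorAction M j (x' a) else 0)
            + (if k = j then factorAction M i (x a) * factorAction M j ⁅y, x' a⁆ else 0)) :=
        Finset.sum_congr rfl fun k _ => step1 k
    _ = (∑ a : ι, factorAction M i ⁅y, x a⁆ * factorAction M j (x' a))
          + ∑ a : ι, factorAction M i (x a) * factorAction M j ⁅y, x' a⁆ := by
        simp only [Finset.sum_add_distrib]
        congr 1
        · rw [Finset.sum_comm]
          exact Finset.sum_congr rfl fun a _ => by
            simp [Finset.sum_ite_eq']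
        · rw [Finset.sum_comm]
          exact Finset.sum_congr rfl fun a _ => by
            simp [Finset.sum_ite_eq']
    _ = 0 := by
        have e1 : ∀ a : ι, factorAction M i ⁅y, x a⁆
            = ∑ b : ι, (B y ⁅x a, x' b⁆) • factorAction M i (x b) := by
          intro a
          conv_lhs => rw [show factorAction M i ⁅y, x a⁆
            = factorActionHom M i ⁅y, x a⁆ from rfl,
            expand1_s6 x B x' hdual ⁅y, x a⁆]
          rw [map_sum]
          exact Finset.sum_congr rfl fun b _ => by
            rw [map_smul, hB_inv]
            rfl
        have e2 : ∀ a : ι, factorAction M j ⁅y, x' a⁆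
            = ∑ b : ι, (-(B y ⁅x b, x' a⁆)) • factorAction M j (x' b) := by
          intro a
          conv_lhs => rw [show factorAction M j ⁅y, x' a⁆
            = factorActionHom M j ⁅y, x' a⁆ from rfl,
            expand2_s6 x B x' hB_nondeg hB_symm hdual ⁅y, x' a⁆]
          rw [map_sum]
          refine Finset.sum_congr rfl fun b _ => ?_
          rw [map_smul]
          have hc : B ⁅y, x' a⁆ (x b) = -(B y ⁅x b, x' a⁆) := by
            rw [hB_inv, ← lie_skew (x b) (x' a), map_neg, neg_neg]
          rw [hc]
          rfl
        calc (∑ a : ι, factorAction M i ⁅y, x a⁆ * factorAction M j (x' a))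
              + ∑ a : ι, factorAction M i (x a) * factorAction M j ⁅y, x' a⁆
            = (∑ a : ι, ∑ b : ι,
                (B y ⁅x a, x' b⁆) • (factorAction M i (x b) * factorAction M j (x' a)))
              + ∑ a : ι, ∑ b : ι,
                (-(B y ⁅x b, x' a⁆)) • (factorAction M i (x a) * factorAction M j (x' b)) := by
              congr 1
              · exact Finset.sum_congr rfl fun a _ => by
                  rw [e1 a, Finset.sum_mul]
                  exact Finset.sum_congr rfl fun b _ => smul_mul_assoc _ _ _
              · exact Finset.sum_congr rfl fun a _ => by
                  rw [e2 a, Finset.mul_sum]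
                  exact Finset.sum_congr rfl fun b _ => mul_smul_comm _ _ _
          _ = 0 := by
              rw [Finset.sum_comm (f := fun a b =>
                (B y ⁅x a, x' b⁆) • (factorAction M i (x b) * factorAction M j (x' a))),
                ← Finset.sum_add_distrib]
              refine Finset.sum_eq_zero fun a _ => ?_
              rw [← Finset.sum_add_distrib]
              refine Finset.sum_eq_zero fun b _ => ?_
              rw [← add_smul]
              simp

end Main


/-- Each Gaudin Hamiltonian is a homomorphism of `L`-modules: for a finite-dimensional
complex Lie algebra with nondegenerate invariant symmetric bilinear form `B`, basis
`{x_a}` and `B`-dual basis `{x^a}`, modules `M₁, …, M_ℓ` (`ℓ ≥ 2`) and distinct complex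
numbers `z₁, …, z_ℓ`, every `H^i` commutes with the diagonal action of `L`. -/
theorem gaudin_hamiltonian_equivariant
    {L : Type*} [LieRing L] [LieAlgebra ℂ L] [FiniteDimensional ℂ L]
    {ι : Type*} [Fintype ι] [DecidableEq ι] (x : Module.Basis ι ℂ L)
    (B : L →ₗ[ℂ] L →ₗ[ℂ] ℂ)
    (hB_nondeg : ∀ u : L, (∀ v : L, B u v = 0) → u = 0)
    (hB_symm : ∀ u v : L, B u v = B v u)
    (hB_inv : ∀ u v w : L, B ⁅u, v⁆ w = B u ⁅v, w⁆)
    (x' : ι → L)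
    (hdual : ∀ a b : ι, B (x a) (x' b) = if a = b then (1 : ℂ) else 0)
    {ℓ : ℕ} (hℓ : 2 ≤ ℓ)
    (M : Fin ℓ → Type*) [∀ j, AddCommGroup (M j)] [∀ j, Module ℂ (M j)]
    [∀ j, LieRingModule L (M j)] [∀ j, LieModule ℂ L (M j)]
    (z : Fin ℓ → ℂ) (hz : Function.Injective z)
    (i : Fin ℓ) (y : L) :
    gaudinH (⇑x) x' M z i ∘ₗ diagAction M y
      = diagAction M y ∘ₗ gaudinH (⇑x) x' M z i := by
  rw [← Module.End.mul_eq_comp, ← Module.End.mul_eq_comp, gaudinH,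
    Finset.sum_mul, Finset.mul_sum]
  refine Finset.sum_congr rfl fun j hj => ?_
  have hji : i ≠ j := (Finset.mem_filter.mp hj).2.symm.symm |>.symm
  rw [smul_mul_assoc, mul_smul_comm,
    omega_comm x B x' M hB_nondeg hB_symm hB_inv hdual hji y]
end
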